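/- arXiv:1103.4404 — 16 statements merged into one kernel-verified Lean document; each statement's English description precedes it below -/
import Mathlib

section
/- Let V be a finite-dimensional complex vector space, let N be a Nijenhuis-type tensor on V, and let h : V × V → V be a symmetric ℂ-bilinear map satisfying the derivation relation N(h(ξ,η), ζ) + N(η, h(ξ,ζ)) = h(ξ, N(η,ζ)) for all ξ, η, ζ ∈ V. Then for all ξ, η, ζ ∈ V one has h(ξ, N(η,ζ)) = 0 and N(h(ξ,η), ζ) = N(h(ξ,ζ), η). -/
open ComplexConjugate

/-- A Nijenhuis-type tensor on a complex vector space `V`: ℝ-bilinear (additive in each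
argument), alternating, and conjugate-homogeneous in each argument over ℂ. -/
structure IsNijenhuisType {V : Type*} [AddCommGroup V] [Module ℂ V] (N : V → V → V) : Prop where
  add_left : ∀ x y z : V, N (x + y) z = N x z + N y z
  add_right : ∀ x y z : V, N x (y + z) = N x y + N x z
  conj_smul_left : ∀ (c : ℂ) (x y : V), N (c • x) y = conj c • N x y
  conj_smul_right : ∀ (c : ℂ) (x y : V), N x (c • y) = conj c • N x y
  alt : ∀ x y : V, N x y = - N y x

/-- A symmetric ℂ-bilinear map `h : V × V → V`. -/
structure IsSymmCBilinear {V : Type*} [AddCommGroup V] [Module ℂ V] (h : V → V → V) : Prop where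
  add_left : ∀ x y z : V, h (x + y) z = h x z + h y z
  smul_left : ∀ (c : ℂ) (x y : V), h (c • x) y = c • h x y
  add_right : ∀ x y z : V, h x (y + z) = h x y + h x z
  smul_right : ∀ (c : ℂ) (x y : V), h x (c • y) = c • h x y
  symm : ∀ x y : V, h x y = h y x

/-- if a symmetric ℂ-bilinear `h` satisfies the derivation relation
`N(h(ξ,η),ζ) + N(η,h(ξ,ζ)) = h(ξ,N(η,ζ))`, then `h(ξ,N(η,ζ)) = 0` and
`N(h(ξ,η),ζ) = N(h(ξ,ζ),η)`. -/
theorem stmt0 {V : Type*} [AddCommGroup V] [Module ℂ V] [FiniteDimensional ℂ V]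
    (N : V → V → V) (hN : IsNijenhuisType N)
    (h : V → V → V) (hh : IsSymmCBilinear h)
    (hder : ∀ ξ η ζ : V, N (h ξ η) ζ + N η (h ξ ζ) = h ξ (N η ζ)) :
    ∀ ξ η ζ : V, h ξ (N η ζ) = 0 ∧ N (h ξ η) ζ = N (h ξ ζ) η := by
  intro ξ η ζ
  have key : h ξ (N η ζ) = 0 := by
    have h1 := hder ξ η ζ
    have h2 := hder ((Complex.I) • ξ) η ζ
    rw [hh.smul_left, hN.conj_smul_left, hh.smul_left, hN.conj_smul_right, hh.smul_left,
      ← smul_add, h1] at h2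
    have : (Complex.I - conj Complex.I) • h ξ (N η ζ) = 0 := by
      rw [sub_smul, h2, sub_self]
    have hc : (Complex.I - conj Complex.I) ≠ 0 := by
      simp [Complex.conj_I]
    exact (smul_eq_zero.mp this).resolve_left hc
  refine ⟨key, ?_⟩
  have h1 := hder ξ η ζ
  rw [key] at h1
  rw [eq_neg_of_add_eq_zero_left h1, hN.alt η (h ξ ζ), neg_neg]
end

section
/- Let V be a finite-dimensional complex vector space, let N be a Nijenhuis-type tensor on V, let W ⊆ V be the complex linear span of the image {N(x,y) : x, y ∈ V}, and let W^⊥ = {v ∈ V : N(v,w) = 0 for all w ∈ W}. If h : V × V → V is a symmetric ℂ-bilinear map satisfying N(h(ξ,η), ζ) + N(η, h(ξ,ζ)) = h(ξ, N(η,ζ)) for all ξ, η, ζ ∈ V, then: (i) h(x, y) = 0 whenever x ∈ W; (ii) h(x,y) ∈ W^⊥ for all x, y ∈ V; and consequently (iii) if W^⊥ = {0} then h = 0. -/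
open ComplexConjugate

/-- for `W` the complex span of the image of `N` and
`W^⊥ = {v | N(v,W) = 0}`, any symmetric ℂ-bilinear `h` satisfying the derivation relation
kills `W` in its first argument, takes values in `W^⊥`, and vanishes if `W^⊥ = 0`. -/
theorem stmt1 {V : Type*} [AddCommGroup V] [Module ℂ V] [FiniteDimensional ℂ V]
    (N : V → V → V) (hN : IsNijenhuisType N)
    (h : V → V → V) (hh : IsSymmCBilinear h)
    (hder : ∀ ξ η ζ : V, N (h ξ η) ζ + N η (h ξ ζ) = h ξ (N η ζ))
    (W : Submodule ℂ V)
    (hW : W = Submodule.span ℂ {v : V | ∃ x y : V, N x y = v}) :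
    (∀ x ∈ W, ∀ y : V, h x y = 0) ∧
    (∀ x y : V, ∀ w ∈ W, N (h x y) w = 0) ∧
    ((∀ v : V, (∀ w ∈ W, N v w = 0) → v = 0) → ∀ x y : V, h x y = 0) := by
  -- basic zero lemmas
  have hN0 : ∀ x : V, N x 0 = 0 := by
    intro x
    have := hN.add_right x 0 0
    rw [add_zero] at this
    exact left_eq_add.mp this
  have hh0l : ∀ y : V, h 0 y = 0 := by
    intro y
    have := hh.add_left 0 0 y
    rw [add_zero] at this
    exact left_eq_add.mp this
  -- key vanishing: h ξ (N η ζ) = 0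
  have hkill : ∀ ξ η ζ : V, h ξ (N η ζ) = 0 := by
    intro ξ η ζ
    have H1 := hder ξ η ζ
    have H2 := hder (Complex.I • ξ) η ζ
    rw [hh.smul_left, hh.smul_left, hh.smul_left, hN.conj_smul_left, hN.conj_smul_right,
      Complex.conj_I, ← smul_add, H1, neg_smul] at H2
    have hX : ((2 : ℂ) * Complex.I) • h ξ (N η ζ) = 0 := by
      have := congrArg (fun v => Complex.I • h ξ (N η ζ) + v) H2
      simp only [add_neg_cancel] at this
      rw [← two_smul ℂ, smul_smul] at this
      exact this.symm
    have h2I : (2 : ℂ) * Complex.I ≠ 0 := by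
      simp [Complex.I_ne_zero]
    have := congrArg (fun v => ((2 : ℂ) * Complex.I)⁻¹ • v) hX
    simpa [smul_smul, inv_mul_cancel₀ h2I] using this
  subst hW
  have part1 : ∀ x ∈ Submodule.span ℂ {v : V | ∃ x y : V, N x y = v}, ∀ y : V, h x y = 0 := by
    intro x hx
    induction hx using Submodule.span_induction with
    | mem v hv =>
      obtain ⟨a, b, rfl⟩ := hv
      intro y
      rw [hh.symm]
      exact hkill y a b
    | zero => exact hh0l
    | add a b _ _ ha hb => intro y; rw [hh.add_left, ha y, hb y, add_zero]
    | smul c a _ ha => intro y; rw [hh.smul_left, ha y, smul_zero]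
  refine ⟨part1, ?_, ?_⟩
  · intro x y w hw
    have H := hder x y w
    rw [hh.symm x w, part1 w hw x, hN0, add_zero] at H
    rw [H]
    exact hkill x y w
  · intro hnd x y
    exact hnd _ (fun w hw => by
      have H := hder x y w
      rw [hh.symm x w, part1 w hw x, hN0, add_zero] at H
      rw [H]; exact hkill x y w)
end

section
/- Let N be a Nijenhuis-type tensor on V = ℂ², and let e₁ = (1,0), e₂ = (0,1) be the standard basis. Then for all x = (x₁,x₂) and y = (y₁,y₂) in ℂ² one has N(x,y) = conj(x₁y₂ - x₂y₁) • N(e₁,e₂). In particular, if N ≠ 0 then the set of values of N is exactly the complex line ℂ • N(e₁,e₂), so the complex span of the image of N is one-dimensional. -/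
open ComplexConjugate

lemma nij_self {V : Type*} [AddCommGroup V] [Module ℂ V] {N : V → V → V}
    (hN : IsNijenhuisType N) (x : V) : N x x = 0 := by
  have h := hN.alt x x
  have h1 : N x x + N x x = 0 := by nth_rewrite 2 [h]; simp
  have h2 : (2 : ℂ) • N x x = 0 := by rw [two_smul]; exact h1
  rcases smul_eq_zero.mp h2 with h3 | h3
  · exact absurd h3 two_ne_zero
  · exact h3

/-- on `V = ℂ²`, a Nijenhuis-type tensor satisfies
`N(x,y) = conj(x₁y₂ - x₂y₁) • N(e₁,e₂)`; in particular, if `N ≠ 0` then the set of values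
of `N` is exactly the complex line `ℂ • N(e₁,e₂)`, whose span is one-dimensional. -/
theorem stmt3 (N : ℂ × ℂ → ℂ × ℂ → ℂ × ℂ) (hN : IsNijenhuisType N) :
    (∀ x y : ℂ × ℂ, N x y = conj (x.1 * y.2 - x.2 * y.1) • N (1, 0) (0, 1)) ∧
    (N ≠ 0 →
      {v : ℂ × ℂ | ∃ x y : ℂ × ℂ, N x y = v} = {v : ℂ × ℂ | ∃ c : ℂ, v = c • N (1, 0) (0, 1)} ∧
      Module.finrank ℂ (Submodule.span ℂ {v : ℂ × ℂ | ∃ x y : ℂ × ℂ, N x y = v}) = 1) := by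
  set w := N (1, 0) (0, 1) with hw
  have key : ∀ x y : ℂ × ℂ, N x y = conj (x.1 * y.2 - x.2 * y.1) • w := by
    rintro ⟨a, b⟩ ⟨c, d⟩
    have hx : ((a, b) : ℂ × ℂ) = a • ((1:ℂ), (0:ℂ)) + b • ((0:ℂ), (1:ℂ)) := by
      ext <;> simp
    have hy : ((c, d) : ℂ × ℂ) = c • ((1:ℂ), (0:ℂ)) + d • ((0:ℂ), (1:ℂ)) := by
      ext <;> simp
    rw [hx, hy]
    simp only [hN.add_left, hN.add_right, hN.conj_smul_left, hN.conj_smul_right,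
      nij_self hN, smul_zero, hN.alt ((0:ℂ),(1:ℂ)) ((1:ℂ),(0:ℂ)), smul_neg, ← hw,
      Prod.fst_add, Prod.snd_add, Prod.smul_fst, Prod.smul_snd, smul_eq_mul,
      mul_one, mul_zero, add_zero, zero_add]
    rw [map_sub, map_mul, map_mul, sub_smul, mul_smul, mul_smul]
    abel
  refine ⟨key, fun hNne => ?_⟩
  have hwne : w ≠ 0 := by
    intro h
    apply hNne
    funext x y
    simp [key x y, h]
  have hset : {v : ℂ × ℂ | ∃ x y : ℂ × ℂ, N x y = v}
      = {v : ℂ × ℂ | ∃ c : ℂ, v = c • w} := by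
    ext v
    constructor
    · rintro ⟨x, y, rfl⟩
      exact ⟨conj (x.1 * y.2 - x.2 * y.1), key x y⟩
    · rintro ⟨c, rfl⟩
      refine ⟨(conj c, 0), (0, 1), ?_⟩
      rw [key]
      simp
  refine ⟨hset, ?_⟩
  rw [hset]
  have : {v : ℂ × ℂ | ∃ c : ℂ, v = c • w} = Set.range (fun c : ℂ => c • w) := by
    ext v; constructor
    · rintro ⟨c, rfl⟩; exact ⟨c, rfl⟩
    · rintro ⟨c, rfl⟩; exact ⟨c, rfl⟩
  rw [this]
  have hspan : Submodule.span ℂ (Set.range (fun c : ℂ => c • w)) = Submodule.span ℂ {w} := by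
    apply le_antisymm
    · rw [Submodule.span_le]
      rintro v ⟨c, rfl⟩
      exact Submodule.smul_mem _ c (Submodule.mem_span_singleton_self w)
    · rw [Submodule.span_le]
      rintro v hv
      rw [Set.mem_singleton_iff] at hv
      subst hv
      exact Submodule.subset_span ⟨1, one_smul _ _⟩
  rw [hspan]
  exact finrank_span_singleton hwne
end

section
/- Let N₁ and N₂ be two nonzero Nijenhuis-type tensors on V = ℂ². Then there exists an invertible ℂ-linear map g : ℂ² → ℂ² such that N₂(x,y) = g⁻¹(N₁(g x, g y)) for all x, y ∈ ℂ². -/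
open ComplexConjugate

private lemma nij_self_zero {V : Type*} [AddCommGroup V] [Module ℂ V] {N : V → V → V}
    (h : IsNijenhuisType N) (x : V) : N x x = 0 := by
  have h1 : N x x = - N x x := h.alt x x
  have h2 : (2:ℂ) • N x x = 0 := by
    rw [two_smul]; nth_rewrite 1 [h1]; abel
  simpa using (smul_eq_zero.mp h2).resolve_left (by norm_num)

private lemma nij_rep {N : ℂ × ℂ → ℂ × ℂ → ℂ × ℂ} (h : IsNijenhuisType N) (x y : ℂ × ℂ) :
    N x y = conj (x.1 * y.2 - x.2 * y.1) • N (1, 0) (0, 1) := by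
  have hx : x = x.1 • ((1:ℂ), (0:ℂ)) + x.2 • ((0:ℂ), (1:ℂ)) := by
    ext <;> simp
  have hy : y = y.1 • ((1:ℂ), (0:ℂ)) + y.2 • ((0:ℂ), (1:ℂ)) := by
    ext <;> simp
  nth_rewrite 1 [hx, hy]
  simp only [h.add_left, h.add_right, h.conj_smul_left, h.conj_smul_right]
  rw [nij_self_zero h, nij_self_zero h, h.alt ((0:ℂ), (1:ℂ)) ((1:ℂ), (0:ℂ))]
  rw [map_sub, map_mul, map_mul]
  module

/-- Complete a nonzero vector in `ℂ²` to an `SL₂` matrix (as a first column). -/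
private lemma col_complete (u : ℂ × ℂ) (hu : u ≠ 0) :
    ∃ b d : ℂ, u.1 * d - b * u.2 = 1 := by
  rcases eq_or_ne u.1 0 with h1 | h1
  · have h2 : u.2 ≠ 0 := by
      intro h2; exact hu (Prod.ext h1 h2)
    exact ⟨-u.2⁻¹, 0, by field_simp [h1]; ring⟩
  · exact ⟨0, u.1⁻¹, by field_simp; ring⟩

private lemma sl2_trans (v w : ℂ × ℂ) (hv : v ≠ 0) (hw : w ≠ 0) :
    ∃ a b c d : ℂ, a * d - b * c = 1 ∧ a * v.1 + b * v.2 = w.1 ∧ c * v.1 + d * v.2 = w.2 := by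
  obtain ⟨b₂, d₂, h₂⟩ := col_complete v hv
  obtain ⟨b₁, d₁, h₁⟩ := col_complete w hw
  refine ⟨w.1 * d₂ - b₁ * v.2, -(w.1 * b₂) + b₁ * v.1,
          w.2 * d₂ - d₁ * v.2, -(w.2 * b₂) + d₁ * v.1, ?_, ?_, ?_⟩
  · linear_combination (w.1 * d₁ - b₁ * w.2) * h₂ + h₁
  · linear_combination w.1 * h₂
  · linear_combination w.2 * h₂

private noncomputable def mkEquiv (a b c d : ℂ) (hdet : a * d - b * c = 1) : (ℂ × ℂ) ≃ₗ[ℂ] (ℂ × ℂ) where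
  toFun x := (a * x.1 + b * x.2, c * x.1 + d * x.2)
  invFun y := (d * y.1 - b * y.2, -(c * y.1) + a * y.2)
  map_add' x y := by ext <;> simp <;> ring
  map_smul' r x := by ext <;> simp <;> ring
  left_inv x := by
    ext
    · show d * (a * x.1 + b * x.2) - b * (c * x.1 + d * x.2) = x.1
      linear_combination x.1 * hdet
    · show -(c * (a * x.1 + b * x.2)) + a * (c * x.1 + d * x.2) = x.2
      linear_combination x.2 * hdet
  right_inv y := by
    ext
    · show a * (d * y.1 - b * y.2) + b * (-(c * y.1) + a * y.2) = y.1
      linear_combination y.1 * hdet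
    · show c * (d * y.1 - b * y.2) + d * (-(c * y.1) + a * y.2) = y.2
      linear_combination y.2 * hdet

/-- any two nonzero Nijenhuis-type tensors on `ℂ²` are equivalent under
the action of `GL(2,ℂ)`: there is an invertible ℂ-linear `g` with
`N₂(x,y) = g⁻¹(N₁(g x, g y))`. -/
theorem stmt4 (N₁ N₂ : ℂ × ℂ → ℂ × ℂ → ℂ × ℂ)
    (h₁ : IsNijenhuisType N₁) (h₂ : IsNijenhuisType N₂)
    (hn₁ : N₁ ≠ 0) (hn₂ : N₂ ≠ 0) :
    ∃ g : (ℂ × ℂ) ≃ₗ[ℂ] (ℂ × ℂ), ∀ x y : ℂ × ℂ, N₂ x y = g.symm (N₁ (g x) (g y)) := by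
  set v₁ := N₁ (1, 0) (0, 1) with hv₁def
  set v₂ := N₂ (1, 0) (0, 1) with hv₂def
  have hv₁ : v₁ ≠ 0 := by
    intro h0
    apply hn₁
    funext x y
    rw [nij_rep h₁ x y, ← hv₁def, h0, smul_zero]; rfl
  have hv₂ : v₂ ≠ 0 := by
    intro h0
    apply hn₂
    funext x y
    rw [nij_rep h₂ x y, ← hv₂def, h0, smul_zero]; rfl
  obtain ⟨a, b, c, d, hdet, hc1, hc2⟩ := sl2_trans v₂ v₁ hv₂ hv₁
  refine ⟨mkEquiv a b c d hdet, fun x y => ?_⟩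
  have hg2 : (mkEquiv a b c d hdet) v₂ = v₁ := by
    show ((a * v₂.1 + b * v₂.2, c * v₂.1 + d * v₂.2) : ℂ × ℂ) = v₁
    ext
    · exact hc1
    · exact hc2
  have hs : (mkEquiv a b c d hdet).symm v₁ = v₂ := by
    rw [← hg2, LinearEquiv.symm_apply_apply]
  have key : N₁ (mkEquiv a b c d hdet x) (mkEquiv a b c d hdet y)
      = conj (x.1 * y.2 - x.2 * y.1) • v₁ := by
    rw [nij_rep h₁, ← hv₁def]
    congr 1
    show conj ((a * x.1 + b * x.2) * (c * y.1 + d * y.2)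
        - (c * x.1 + d * x.2) * (a * y.1 + b * y.2)) = conj (x.1 * y.2 - x.2 * y.1)
    congr 1
    linear_combination (x.1 * y.2 - x.2 * y.1) * hdet
  rw [key, map_smul, hs, nij_rep h₂, ← hv₂def]
end

section
/- Let N be a nonzero Nijenhuis-type tensor on V = ℂ², and let Π = ℂ • N(e₁,e₂) be the complex span of the image of N (a complex line). Let h : V × V → V be a symmetric ℂ-bilinear map. Then h satisfies the two relations N(h(ξ,η), ζ) = N(h(ξ,ζ), η) and h(ξ, N(η,ζ)) = 0 for all ξ, η, ζ ∈ V if and only if h(x,y) = 0 whenever x ∈ Π and h(x,y) ∈ Π for all x, y ∈ V. -/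
open ComplexConjugate

lemma key {K : Type*} [Field K] (A1 A2 B1 B2 C1 C2 n1 n2 x1 x2 y1 y2 z1 z2 : K)
    (h1 : A1 * n2 = A2 * n1) (h2 : B1 * n2 = B2 * n1) (h3 : C1 * n2 = C2 * n1)
    (h4 : n1 * A1 + n2 * B1 = 0) (h5 : n1 * A2 + n2 * B2 = 0)
    (h6 : n1 * B1 + n2 * C1 = 0) (h7 : n1 * B2 + n2 * C2 = 0)
    (hne : n1 ≠ 0 ∨ n2 ≠ 0) :
    (x1*y1*A1 + x1*y2*B1 + x2*y1*B1 + x2*y2*C1) * z2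
      - (x1*y1*A2 + x1*y2*B2 + x2*y1*B2 + x2*y2*C2) * z1
    = (x1*z1*A1 + x1*z2*B1 + x2*z1*B1 + x2*z2*C1) * y2
      - (x1*z1*A2 + x1*z2*B2 + x2*z1*B2 + x2*z2*C2) * y1 := by
  rcases hne with hn | hn
  · have hn2 : n2 = (n2 / n1) * n1 := by field_simp
    set t := n2 / n1 with ht
    have cancel : ∀ a b : K, a * n1 = b * n1 → a = b := fun a b hab =>
      mul_right_cancel₀ hn hab
    have eA2 : A2 = t * A1 := cancel _ _ (by linear_combination -h1 + A1 * hn2)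
    have eB2 : B2 = t * B1 := cancel _ _ (by linear_combination -h2 + B1 * hn2)
    have eC2 : C2 = t * C1 := cancel _ _ (by linear_combination -h3 + C1 * hn2)
    have eA1 : A1 = -(t * B1) := cancel _ _ (by linear_combination h4 - B1 * hn2)
    have eB1 : B1 = -(t * C1) := cancel _ _ (by linear_combination h6 - C1 * hn2)
    rw [eA2, eB2, eC2, eA1, eB1]; ring
  · have hn1 : n1 = (n1 / n2) * n2 := by field_simp
    set s := n1 / n2 with hs
    have cancel : ∀ a b : K, a * n2 = b * n2 → a = b := fun a b hab =>
      mul_right_cancel₀ hn hab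
    have eA1 : A1 = s * A2 := cancel _ _ (by linear_combination h1 + A2 * hn1)
    have eB1 : B1 = s * B2 := cancel _ _ (by linear_combination h2 + B2 * hn1)
    have eC1 : C1 = s * C2 := cancel _ _ (by linear_combination h3 + C2 * hn1)
    have eC2 : C2 = -(s * B2) := cancel _ _ (by linear_combination h7 - B2 * hn1)
    have eB2 : B2 = -(s * A2) := cancel _ _ (by linear_combination h5 - A2 * hn1)
    rw [eA1, eB1, eC1, eC2, eB2]; ring

/-- for a nonzero Nijenhuis-type tensor on `ℂ²` with characteristic line
`Π = ℂ • N(e₁,e₂)`, a symmetric ℂ-bilinear `h` satisfies the two symbol relations iff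
`h(Π,·) = 0` and `h` takes values in `Π` (i.e. `g₂ = S²Ann(Π) ⊗ Π`). -/
theorem stmt5 (N : ℂ × ℂ → ℂ × ℂ → ℂ × ℂ) (hN : IsNijenhuisType N) (hn : N ≠ 0)
    (h : ℂ × ℂ → ℂ × ℂ → ℂ × ℂ) (hh : IsSymmCBilinear h) :
    ((∀ ξ η ζ : ℂ × ℂ, N (h ξ η) ζ = N (h ξ ζ) η) ∧
     (∀ ξ η ζ : ℂ × ℂ, h ξ (N η ζ) = 0)) ↔
    ((∀ x y : ℂ × ℂ, x ∈ Submodule.span ℂ {N (1, 0) (0, 1)} → h x y = 0) ∧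
     (∀ x y : ℂ × ℂ, h x y ∈ Submodule.span ℂ {N (1, 0) (0, 1)})) := by
  set n : ℂ × ℂ := N (1, 0) (0, 1) with hns
  -- decomposition
  have hdec : ∀ x : ℂ × ℂ, x = x.1 • ((1, 0) : ℂ × ℂ) + x.2 • ((0, 1) : ℂ × ℂ) := by
    intro x; ext <;> simp
  -- N x x = 0
  have Nzero : ∀ x : ℂ × ℂ, N x x = 0 := by
    intro x
    have h2 : (2 : ℂ) • N x x = 0 := by
      rw [two_smul]; nth_rewrite 2 [hN.alt x x]; exact add_neg_cancel _
    rcases smul_eq_zero.mp h2 with hc | hc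
    · exact absurd hc two_ne_zero
    · exact hc
  -- the structure formula for N
  have NA : ∀ x y : ℂ × ℂ, N x y = conj (x.1 * y.2 - x.2 * y.1) • n := by
    intro x y
    conv_lhs => rw [hdec x, hdec y]
    simp only [hN.add_left, hN.add_right, hN.conj_smul_left, hN.conj_smul_right]
    rw [Nzero ((1,0) : ℂ × ℂ), Nzero ((0,1) : ℂ × ℂ),
      show N ((0,1) : ℂ × ℂ) ((1,0) : ℂ × ℂ) = -n from by rw [hN.alt]]
    simp only [smul_zero, add_zero, zero_add, map_sub, map_mul, smul_neg, smul_smul]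
    module
  -- n ≠ 0
  have nne : n ≠ 0 := by
    intro h0
    apply hn
    funext x y
    rw [NA x y, h0, smul_zero]; rfl
  have nne' : n.1 ≠ 0 ∨ n.2 ≠ 0 := by
    by_contra hc
    push_neg at hc
    exact nne (Prod.ext hc.1 hc.2)
  -- membership criterion
  have mem : ∀ x : ℂ × ℂ, x ∈ Submodule.span ℂ {n} ↔ x.1 * n.2 - x.2 * n.1 = 0 := by
    intro x
    rw [Submodule.mem_span_singleton]
    constructor
    · rintro ⟨a, rfl⟩
      simp [Prod.smul_fst, Prod.smul_snd, smul_eq_mul]; ring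
    · intro hd
      rcases nne' with h1 | h2
      · refine ⟨x.1 / n.1, ?_⟩
        ext
        · simp [smul_eq_mul]; field_simp
        · simp [smul_eq_mul]; field_simp; linear_combination hd
      · refine ⟨x.2 / n.2, ?_⟩
        ext
        · simp [smul_eq_mul]; field_simp; linear_combination -hd
        · simp [smul_eq_mul]; field_simp
  -- expansion of h
  have hexp : ∀ x y : ℂ × ℂ, h x y
      = (x.1 * y.1) • h (1,0) (1,0) + (x.1 * y.2) • h (1,0) (0,1)
        + (x.2 * y.1) • h (1,0) (0,1) + (x.2 * y.2) • h (0,1) (0,1) := by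
    intro x y
    conv_lhs => rw [hdec x, hdec y]
    simp only [hh.add_left, hh.add_right, hh.smul_left, hh.smul_right, smul_smul]
    rw [hh.symm ((0,1) : ℂ × ℂ) ((1,0) : ℂ × ℂ)]
    module
  constructor
  · rintro ⟨R1, R2⟩
    constructor
    · intro x y hx
      rw [Submodule.mem_span_singleton] at hx
      obtain ⟨a, rfl⟩ := hx
      rw [hh.smul_left, hh.symm, R2 y (1,0) (0,1), smul_zero]
    · intro x y
      rw [mem]
      have hz : N (h x y) n = 0 := by
        have := R1 x y n
        rw [R2 x (1,0) (0,1)] at this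
        rw [this, NA]
        simp
      rw [NA] at hz
      rcases smul_eq_zero.mp hz with hc | hc
      · have : (h x y).1 * n.2 - (h x y).2 * n.1 = 0 := by
          have := congrArg conj hc
          simpa using this
        exact this
      · exact absurd hc nne
  · rintro ⟨H1, H2⟩
    have hn0 : ∀ y : ℂ × ℂ, h y n = 0 := fun y => by
      rw [hh.symm]; exact H1 n y (Submodule.mem_span_singleton_self n)
    constructor
    · intro ξ η ζ
      rw [NA (h ξ η) ζ, NA (h ξ ζ) η]
      have hsc : (h ξ η).1 * ζ.2 - (h ξ η).2 * ζ.1 = (h ξ ζ).1 * η.2 - (h ξ ζ).2 * η.1 := by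
        set A := h (1,0) (1,0) with hA
        set B := h (1,0) (0,1) with hB
        set C := h (0,1) (0,1) with hC
        have FA : A.1 * n.2 = A.2 * n.1 := sub_eq_zero.mp ((mem A).mp (H2 (1,0) (1,0)))
        have FB : B.1 * n.2 = B.2 * n.1 := sub_eq_zero.mp ((mem B).mp (H2 (1,0) (0,1)))
        have FC : C.1 * n.2 = C.2 * n.1 := sub_eq_zero.mp ((mem C).mp (H2 (0,1) (0,1)))
        have E1 : n.1 • A + n.2 • B = 0 := by
          have := hn0 ((1,0) : ℂ × ℂ)
          rw [hh.symm, hexp n (1,0)] at this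
          simpa [mul_comm] using this
        have E2 : n.1 • B + n.2 • C = 0 := by
          have := hn0 ((0,1) : ℂ × ℂ)
          rw [hh.symm, hexp n (0,1)] at this
          simpa [mul_comm] using this
        have E11 : n.1 * A.1 + n.2 * B.1 = 0 := by
          have := congrArg Prod.fst E1; simpa using this
        have E12 : n.1 * A.2 + n.2 * B.2 = 0 := by
          have := congrArg Prod.snd E1; simpa using this
        have E21 : n.1 * B.1 + n.2 * C.1 = 0 := by
          have := congrArg Prod.fst E2; simpa using this
        have E22 : n.1 * B.2 + n.2 * C.2 = 0 := by
          have := congrArg Prod.snd E2; simpa using this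
        have hc1 : ∀ x y : ℂ × ℂ,
            (h x y).1 = x.1*y.1*A.1 + x.1*y.2*B.1 + x.2*y.1*B.1 + x.2*y.2*C.1 := by
          intro x y; rw [hexp x y]; simp [smul_eq_mul]
        have hc2 : ∀ x y : ℂ × ℂ,
            (h x y).2 = x.1*y.1*A.2 + x.1*y.2*B.2 + x.2*y.1*B.2 + x.2*y.2*C.2 := by
          intro x y; rw [hexp x y]; simp [smul_eq_mul]
        rw [hc1 ξ η, hc2 ξ η, hc1 ξ ζ, hc2 ξ ζ]
        exact key A.1 A.2 B.1 B.2 C.1 C.2 n.1 n.2 ξ.1 ξ.2 η.1 η.2 ζ.1 ζ.2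
          FA FB FC E11 E12 E21 E22 nne'
      rw [hsc]
    · intro ξ η ζ
      rw [NA η ζ, hh.smul_right, hn0 ξ, smul_zero]
end

section
/- Let a, α, b, β ∈ ℂ and define the ℝ-linear map J : ℂ² → ℂ² by J(u,v) = (a·u + conj(α)·conj(u), b·u + conj(β)·conj(u) + i·v). Then J ∘ J = -id if and only if the following four equations hold: (a + conj(a))·α = 0, a² + α·conj(α) = -1, (a+i)·b + α·conj(β) = 0, and conj(α)·b + (conj(a)+i)·conj(β) = 0. -/
open ComplexConjugate

/-- The ℝ-linear endomorphism of `ℂ²` encoding the almost complex structure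
`J∂_z = a∂_z + α∂_z̄ + b∂_w + β∂_w̄`, `J∂_w = i∂_w` (a real tangent vector
`u∂_z + ū∂_z̄ + v∂_w + v̄∂_w̄` is encoded as the pair `(u,v)`). -/
noncomputable def Jstr (a α b β : ℂ) (q : ℂ × ℂ) : ℂ × ℂ :=
  (a * q.1 + conj α * conj q.1, b * q.1 + conj β * conj q.1 + Complex.I * q.2)

/-- `J ∘ J = -id` iff the four algebraic equations on `a, α, b, β` hold. -/
theorem stmt6 (a α b β : ℂ) :
    (∀ p : ℂ × ℂ, Jstr a α b β (Jstr a α b β p) = -p) ↔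
    ((a + conj a) * α = 0 ∧
     a ^ 2 + α * conj α = -1 ∧
     (a + Complex.I) * b + α * conj β = 0 ∧
     conj α * b + (conj a + Complex.I) * conj β = 0) := by
  constructor
  · intro h
    have h1 := h (1, 0)
    have h2 := h (Complex.I, 0)
    simp only [Jstr, Prod.ext_iff, Prod.fst_neg, Prod.snd_neg, map_neg, RingHom.id_apply, neg_neg, map_add, map_mul,
      RingHomCompTriple.comp_apply, Complex.conj_conj, map_one, Complex.conj_I,
      mul_one, mul_zero, add_zero, zero_add] at h1 h2
    obtain ⟨h11, h12⟩ := h1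
    obtain ⟨h21, h22⟩ := h2
    have e1c : (conj a + a) * conj α = 0 := by
      linear_combination (1/2 : ℂ) * h11 + (Complex.I/2) * h21
        + ((conj a * conj α + a * conj α)/2 - (1 + a^2 + α*conj α)/2) * Complex.I_sq
    refine ⟨?_, ?_, ?_, ?_⟩
    · have := congrArg conj e1c
      simpa [map_add, map_mul, mul_comm] using this
    · linear_combination (1/2 : ℂ) * h11 - (Complex.I/2) * h21
        + ((1 + a^2 + α * conj α)/2 - (a*conj α + conj a*conj α)/2) * Complex.I_sq
    · linear_combination (1/2 : ℂ) * h12 - (Complex.I/2) * h22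
        + (a*b/2 + Complex.I*b/2 - Complex.I*conj β/2 - b*conj α/2 + α*conj β/2
           - conj β * conj a/2) * Complex.I_sq
    · linear_combination (1/2 : ℂ) * h12 + (Complex.I/2) * h22
        + (conj α*b/2 + conj a*conj β/2 + Complex.I*conj β/2 - Complex.I*b/2 - a*b/2 - α*conj β/2) * Complex.I_sq
  · rintro ⟨e1, e2, e3, e4⟩ ⟨u, v⟩
    have e1c : (conj a + a) * conj α = 0 := by
      have := congrArg conj e1
      simpa [map_add, map_mul, mul_comm] using this
    simp only [Jstr, Prod.ext_iff, Prod.fst_neg, Prod.snd_neg, map_neg, RingHom.id_apply, neg_neg, map_add, map_mul,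
      Complex.conj_conj]
    constructor
    · linear_combination u * e2 + conj u * e1c
    · linear_combination u * e3 + conj u * e4 + v * Complex.I_mul_I
end

section
/- For any α, β ∈ ℂ, set k = √(1 + |α|²) ∈ ℝ, a = i·k, and b = i·α·conj(β)/(1+k). Then the ℝ-linear map J : ℂ² → ℂ² defined by J(u,v) = (a·u + conj(α)·conj(u), b·u + conj(β)·conj(u) + i·v) satisfies J ∘ J = -id. -/
open ComplexConjugate

/-- for any `α, β ∈ ℂ`, with `k = √(1+|α|²)`, `a = i·k` and
`b = i·α·conj β/(1+k)`, the map `J` of the normal form of Lemma 1 satisfies `J∘J = -id`. -/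
theorem stmt7 (α β : ℂ) :
    ∀ p : ℂ × ℂ,
      Jstr (Complex.I * (Real.sqrt (1 + ‖α‖ ^ 2) : ℂ)) α
        (Complex.I * α * conj β / (1 + (Real.sqrt (1 + ‖α‖ ^ 2) : ℂ))) β
        (Jstr (Complex.I * (Real.sqrt (1 + ‖α‖ ^ 2) : ℂ)) α
          (Complex.I * α * conj β / (1 + (Real.sqrt (1 + ‖α‖ ^ 2) : ℂ))) β p)
      = -p := by
  rintro ⟨u, v⟩
  set k : ℝ := Real.sqrt (1 + ‖α‖ ^ 2) with hkdef
  have hk2 : (k : ℂ) ^ 2 = 1 + α * conj α := by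
    have h0 : (0:ℝ) ≤ 1 + ‖α‖ ^ 2 := by positivity
    have h1 : k ^ 2 = 1 + Complex.normSq α := by
      rw [hkdef, Real.sq_sqrt h0, Complex.sq_norm]
    calc ((k : ℂ)) ^ 2 = ((k ^ 2 : ℝ) : ℂ) := by push_cast; ring
      _ = 1 + α * conj α := by rw [h1, Complex.mul_conj]; push_cast; ring
  have hkne : (1 : ℂ) + (k : ℂ) ≠ 0 := by
    have hk0 : (0:ℝ) ≤ k := Real.sqrt_nonneg _
    intro h
    have := congrArg Complex.re h
    simp [Complex.add_re, Complex.ofReal_re] at this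
    linarith
  simp only [Jstr, Prod.mk.injEq, map_add, map_mul, Complex.conj_conj, Complex.conj_I,
    Complex.conj_ofReal, map_div₀, map_one, Prod.neg_mk]
  constructor
  · linear_combination (-u) * hk2 + (k : ℂ) ^ 2 * u * Complex.I_sq
  · field_simp
    linear_combination (-(Complex.I * conj β * conj u)) * hk2 +
      (α * conj β * u + v) * (1 + (k : ℂ)) * Complex.I_sq
end

section
/- Let u, v ∈ ℂ with |v| < |u|, and set α = -2i·u·v/(|u|² - |v|²). Then i·α·conj(u) = (1 + √(1 + |α|²))·v. -/
open ComplexConjugate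

/-- for `u, v ∈ ℂ` with `|v| < |u|` and `α = -2i·u·v/(|u|² - |v|²)`, one has
`i·α·conj(u) = (1 + √(1 + |α|²))·v`. -/
theorem stmt8 (u v : ℂ) (huv : ‖v‖ < ‖u‖)
    (α : ℂ)
    (hα : α = -2 * Complex.I * u * v / ((‖u‖ ^ 2 - ‖v‖ ^ 2 : ℝ) : ℂ)) :
    Complex.I * α * conj u = ((1 + Real.sqrt (1 + ‖α‖ ^ 2) : ℝ) : ℂ) * v := by
  set a := ‖u‖ with ha
  set b := ‖v‖ with hb
  have hb0 : 0 ≤ b := norm_nonneg v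
  have hD : (0:ℝ) < a ^ 2 - b ^ 2 := by nlinarith [norm_nonneg u]
  have hDne : ((a ^ 2 - b ^ 2 : ℝ) : ℂ) ≠ 0 := by
    exact_mod_cast Complex.ofReal_ne_zero.mpr (ne_of_gt hD)
  have habs : ‖α‖ = 2 * a * b / (a ^ 2 - b ^ 2) := by
    rw [hα, norm_div, Complex.norm_real, Real.norm_of_nonneg hD.le]
    simp [map_mul]
    rfl
  have hsqrt : Real.sqrt (1 + ‖α‖ ^ 2) = (a ^ 2 + b ^ 2) / (a ^ 2 - b ^ 2) := by
    rw [habs]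
    rw [show (1:ℝ) + (2 * a * b / (a ^ 2 - b ^ 2)) ^ 2
        = ((a ^ 2 + b ^ 2) / (a ^ 2 - b ^ 2)) ^ 2 by
      field_simp
      ring]
    exact Real.sqrt_sq (by positivity)
  have hcoef : (1:ℝ) + Real.sqrt (1 + ‖α‖ ^ 2) = 2 * a ^ 2 / (a ^ 2 - b ^ 2) := by
    rw [hsqrt]; field_simp; ring
  have hmul : (u : ℂ) * conj u = ((a ^ 2 : ℝ) : ℂ) := by
    rw [Complex.mul_conj]
    norm_cast
    exact (Complex.sq_norm u).symm
  rw [hcoef, hα]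
  push_cast
  field_simp
  push_cast at hmul
  linear_combination (v / ((a:ℂ) ^ 2 - (b:ℂ) ^ 2)) * hmul +
    (-u * v * conj u / ((a:ℂ) ^ 2 - (b:ℂ) ^ 2)) * Complex.I_mul_I
end

section
/- Let b : ℂ × ℂ → ℂ be continuously differentiable over ℝ, and for each point p ∈ ℂ × ℂ define the ℝ-linear map J_p : ℂ² → ℂ² by J_p(u,v) = (i·u, i·v + conj(b(p))·conj(u)). Then: (i) J_p ∘ J_p = -id for every p; (ii) letting E₁, E₂ : ℂ² → ℂ² be the constant vector fields E₁ ≡ (1,0), E₂ ≡ (0,1), and JX the vector field p ↦ J_p(X(p)), the Nijenhuis expression N(p) = [JE₁, JE₂](p) - J_p([E₁, JE₂](p)) - J_p([JE₁, E₂](p)) - [E₁,E₂](p) equals (0, i·D(conj∘b)(p)(0,1) - D(conj∘b)(p)(0,i)), where D f(p)(w) denotes the Fréchet derivative of f at p in direction w. Equivalently, N(p) = (0, 2i·conj(b_w(p))) where b_w = ½(∂b/∂s - i·∂b/∂t) is the Wirtinger derivative in the second coordinate w = s + it. -/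
open ComplexConjugate

/-- The ℝ-linear map encoding the almost complex structure
`J∂_z = i∂_z + b∂_w̄`, `J∂_w = i∂_w` on `ℝ⁴ = ℂ²` at the point `p`. -/
noncomputable def Jb (b : ℂ × ℂ → ℂ) (p : ℂ × ℂ) (ξ : ℂ × ℂ) : ℂ × ℂ :=
  (Complex.I * ξ.1, Complex.I * ξ.2 + conj (b p) * conj ξ.1)

/-- Lie bracket of vector fields on the flat space `ℂ²`:
`[X,Y](p) = DY(p)(X(p)) - DX(p)(Y(p))`. -/
noncomputable def vbracket (X Y : ℂ × ℂ → ℂ × ℂ) (p : ℂ × ℂ) : ℂ × ℂ :=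
  fderiv ℝ Y p (X p) - fderiv ℝ X p (Y p)

/-- The Nijenhuis expression `N(p) = [JE₁,JE₂](p) - J_p[E₁,JE₂](p) - J_p[JE₁,E₂](p) - [E₁,E₂](p)`
for the constant vector fields `E₁ ≡ (1,0)`, `E₂ ≡ (0,1)`. -/
noncomputable def nijExpr (b : ℂ × ℂ → ℂ) (p : ℂ × ℂ) : ℂ × ℂ :=
  vbracket (fun q => Jb b q (1, 0)) (fun q => Jb b q (0, 1)) p
    - Jb b p (vbracket (fun _ => (1, 0)) (fun q => Jb b q (0, 1)) p)
    - Jb b p (vbracket (fun q => Jb b q (1, 0)) (fun _ => (0, 1)) p)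
    - vbracket (fun _ => (1, 0)) (fun _ => (0, 1)) p

/-- (i) `J_p ∘ J_p = -id`; (ii) the Nijenhuis expression equals
`(0, i·D(conj∘b)(p)(0,1) - D(conj∘b)(p)(0,i))`, equivalently `(0, 2i·conj(b_w(p)))` where
`b_w = ½(∂b/∂s - i·∂b/∂t)` is the Wirtinger derivative in the second coordinate. -/
theorem stmt12 (b : ℂ × ℂ → ℂ) (hb : ContDiff ℝ 1 b) :
    (∀ (p ξ : ℂ × ℂ), Jb b p (Jb b p ξ) = -ξ) ∧
    (∀ p : ℂ × ℂ,
      nijExpr b p =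
        (0, Complex.I * fderiv ℝ (fun q => conj (b q)) p (0, 1)
            - fderiv ℝ (fun q => conj (b q)) p (0, Complex.I)) ∧
      nijExpr b p =
        (0, 2 * Complex.I *
          conj ((fderiv ℝ b p (0, 1) - Complex.I * fderiv ℝ b p (0, Complex.I)) / 2))) := by
  constructor
  · intro p ξ
    simp only [Jb, map_mul, Complex.conj_I, Prod.ext_iff, Prod.fst_neg, Prod.snd_neg]
    constructor
    · linear_combination ξ.1 * Complex.I_mul_I
    · linear_combination ξ.2 * Complex.I_mul_I
  · intro p
    have hbd : DifferentiableAt ℝ b p := (hb.differentiable one_ne_zero) p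
    set Db := fderiv ℝ b p with hDb
    set L := (Complex.conjCLE.toContinuousLinearMap).comp Db with hL
    have hc : HasFDerivAt (fun q => conj (b q)) L p :=
      (Complex.conjCLE.toContinuousLinearMap.hasFDerivAt).comp p hbd.hasFDerivAt
    have hcf : fderiv ℝ (fun q => conj (b q)) p = L := hc.fderiv
    have hJ1 : (fun q => Jb b q (1, 0)) = fun q => (Complex.I, conj (b q)) := by
      funext q; simp [Jb]
    have hJ2 : (fun q => Jb b q (0, 1)) = fun _ : ℂ × ℂ => ((0 : ℂ), Complex.I) := by
      funext q; simp [Jb]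
    have hJ1f : fderiv ℝ (fun q => (Complex.I, conj (b q))) p =
        ((0 : (ℂ × ℂ) →L[ℝ] ℂ).prod L) :=
      (HasFDerivAt.prodMk (hasFDerivAt_const Complex.I p) hc).fderiv
    have hJ2f : fderiv ℝ (fun q => Jb b q (0, 1)) p = 0 := by
      rw [hJ2]; exact fderiv_const_apply _
    have hN : nijExpr b p = (0, Complex.I * conj (Db (0, 1)) - conj (Db (0, Complex.I))) := by
      simp only [nijExpr, vbracket, hJ1, hJ2, hJ1f, fderiv_const_apply,
        ContinuousLinearMap.zero_apply, ContinuousLinearMap.prod_apply,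
        ContinuousLinearMap.comp_apply, hL]
      simp only [Jb, Complex.conjCLE_apply, Prod.mk_sub_mk, Prod.ext_iff]
      constructor <;> simp <;> ring
    constructor
    · rw [hN, hcf]
      simp [hL]
    · rw [hN]
      simp only [map_div₀, map_sub, map_mul, Complex.conj_I, map_ofNat]
      rw [Prod.ext_iff]
      constructor
      · rfl
      · linear_combination (-conj (Db (0, Complex.I))) * Complex.I_mul_I
end

section
/- Let b : ℂ × ℂ → ℂ be defined by b(z,w) = exp(2πi·Re(w)), and for each p ∈ ℂ × ℂ define the ℝ-linear map J_p : ℂ² → ℂ² by J_p(u,v) = (i·u, i·v + conj(b(p))·conj(u)). Let E₁, E₂ : ℂ² → ℂ² be the constant vector fields E₁ ≡ (1,0), E₂ ≡ (0,1), and JX the vector field p ↦ J_p(X(p)). Then for every p, the Nijenhuis expression N(p) = [JE₁, JE₂](p) - J_p([E₁, JE₂](p)) - J_p([JE₁, E₂](p)) - [E₁,E₂](p) equals (0, 2π·conj(b(p))), which is nonzero. -/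
open ComplexConjugate

/-- for `b(z,w) = exp(2πi·Re w)` the Nijenhuis expression equals
`(0, 2π·conj(b(p)))`, which is nonzero (the torus example of a non-degenerate structure). -/
theorem stmt13 (b : ℂ × ℂ → ℂ)
    (hb : ∀ p : ℂ × ℂ, b p = Complex.exp (2 * (Real.pi : ℂ) * Complex.I * (p.2.re : ℂ))) :
    ∀ p : ℂ × ℂ,
      nijExpr b p = (0, 2 * (Real.pi : ℂ) * conj (b p)) ∧ nijExpr b p ≠ 0 := by
  intro p
  set c : ℂ := -(2 * (Real.pi : ℂ) * Complex.I) with hc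
  have hconj : ∀ q : ℂ × ℂ, conj (b q) = Complex.exp (c * (q.2.re : ℂ)) := by
    intro q
    rw [hb, ← Complex.exp_conj]
    congr 1
    simp [hc, Complex.ext_iff]
  -- the linear map v ↦ c * (v.2.re : ℂ)
  set M : (ℂ × ℂ) →L[ℝ] ℂ :=
    c • (Complex.ofRealCLM.comp (Complex.reCLM.comp (ContinuousLinearMap.snd ℝ ℂ ℂ))) with hM
  have hMapply : ∀ v : ℂ × ℂ, M v = c * (v.2.re : ℂ) := by
    intro v; simp [hM, smul_eq_mul]
  have hg : HasFDerivAt (fun q : ℂ × ℂ => c * ((q.2.re : ℝ) : ℂ)) M p := by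
    have : (fun q : ℂ × ℂ => c * ((q.2.re : ℝ) : ℂ)) = fun q => M q := by
      funext q; rw [hMapply]
    rw [this]
    exact M.hasFDerivAt
  have hf : HasFDerivAt (fun q : ℂ × ℂ => conj (b q))
      (Complex.exp (c * (p.2.re : ℂ)) • M) p := by
    refine HasFDerivAt.congr_of_eventuallyEq hg.cexp ?_
    exact Filter.Eventually.of_forall hconj
  -- the first vector field JE₁
  have hF1eq : (fun q => Jb b q (1, 0)) = fun q : ℂ × ℂ => (Complex.I, conj (b q)) := by
    funext q; simp [Jb]
  have hF1 : HasFDerivAt (fun q => Jb b q (1, 0))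
      ((0 : (ℂ × ℂ) →L[ℝ] ℂ).prod (Complex.exp (c * (p.2.re : ℂ)) • M)) p := by
    rw [hF1eq]
    exact HasFDerivAt.prodMk (hasFDerivAt_const Complex.I p) hf
  have hdF1 : fderiv ℝ (fun q => Jb b q (1, 0)) p
      = (0 : (ℂ × ℂ) →L[ℝ] ℂ).prod (Complex.exp (c * (p.2.re : ℂ)) • M) := hF1.fderiv
  -- JE₂ is constant
  have hF2eq : (fun q => Jb b q (0, 1)) = fun _ : ℂ × ℂ => ((0 : ℂ), Complex.I) := by
    funext q; simp [Jb]
  have hdF2 : fderiv ℝ (fun q => Jb b q (0, 1)) p = 0 := by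
    rw [hF2eq]; exact fderiv_const_apply _
  have hdE1 : fderiv ℝ (fun _ : ℂ × ℂ => ((1 : ℂ), (0 : ℂ))) p = 0 := fderiv_const_apply _
  have hdE2 : fderiv ℝ (fun _ : ℂ × ℂ => ((0 : ℂ), (1 : ℂ))) p = 0 := fderiv_const_apply _
  have hbp : conj (b p) = Complex.exp (c * (p.2.re : ℂ)) := hconj p
  have hmain : nijExpr b p = (0, 2 * (Real.pi : ℂ) * conj (b p)) := by
    simp only [nijExpr, vbracket, hdF1, hdF2, hdE1, hdE2]
    simp only [ContinuousLinearMap.zero_apply, ContinuousLinearMap.prod_apply,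
      ContinuousLinearMap.smul_apply, hMapply, hF2eq, hF1eq]
    simp only [Complex.I_re, Complex.one_re, Complex.ofReal_zero, Complex.ofReal_one,
      mul_zero, mul_one, smul_eq_mul]
    rw [← hbp]
    simp [Jb, Prod.ext_iff, hc]
    have hI : Complex.I * Complex.I = -1 := Complex.I_mul_I
    linear_combination (-(2 : ℂ) * (Real.pi : ℂ) * conj (b p)) * hI
  refine ⟨hmain, ?_⟩
  rw [hmain]
  intro h
  have h2 := congrArg Prod.snd h
  simp only [Prod.snd_zero] at h2
  have hbne : b p ≠ 0 := by rw [hb]; exact Complex.exp_ne_zero _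
  have : conj (b p) ≠ 0 := by simpa using hbne
  have hpi : (Real.pi : ℂ) ≠ 0 := Complex.ofReal_ne_zero.mpr Real.pi_ne_zero
  exact (mul_ne_zero (mul_ne_zero two_ne_zero hpi) this) h2
end

section
/- For each point p = (z,w) ∈ ℂ × ℂ define the ℝ-linear map J_p : ℂ² → ℂ² by J_p(u,v) = (i·u, i·v + conj(w)·conj(u)). Let f : ℂ → ℂ be continuously differentiable over ℝ and define F : ℂ² → ℂ² by F(z,w) = (z, w + f(z)). Then F preserves J, i.e. DF(p)(J_p(ξ)) = J_{F(p)}(DF(p)(ξ)) for every p ∈ ℂ² and every ξ ∈ ℂ², if and only if f satisfies the linear Cauchy-Riemann-type equation Df(z)(1) + i·Df(z)(i) = i·conj(f(z)) for all z ∈ ℂ (equivalently, the Wirtinger derivative f_{z̄} = ½(∂f/∂x + i·∂f/∂y) equals (i/2)·conj(f)). -/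
open ComplexConjugate

/-- The ℝ-linear map at `p = (z,w)` encoding the sub-maximally symmetric almost complex
structure `J∂_z = i∂_z + w∂_w̄`, `J∂_w = i∂_w` on `ℝ⁴ = ℂ²`. -/
noncomputable def Jsub (p : ℂ × ℂ) (ξ : ℂ × ℂ) : ℂ × ℂ :=
  (Complex.I * ξ.1, Complex.I * ξ.2 + conj p.2 * conj ξ.1)

/-- the fiber shift `F(z,w) = (z, w + f(z))` preserves `J` iff `f` satisfies
the linear Cauchy-Riemann-type equation `Df(z)(1) + i·Df(z)(i) = i·conj(f(z))`
(i.e. `f_z̄ = (i/2)·conj f`). -/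
theorem stmt14 (f : ℂ → ℂ) (hf : ContDiff ℝ 1 f)
    (F : ℂ × ℂ → ℂ × ℂ) (hF : ∀ q : ℂ × ℂ, F q = (q.1, q.2 + f q.1)) :
    (∀ (p ξ : ℂ × ℂ), fderiv ℝ F p (Jsub p ξ) = Jsub (F p) (fderiv ℝ F p ξ)) ↔
    (∀ z : ℂ, fderiv ℝ f z 1 + Complex.I * fderiv ℝ f z Complex.I
        = Complex.I * conj (f z)) := by
  have hf' : Differentiable ℝ f := hf.differentiable one_ne_zero
  have hFe : F = fun q : ℂ × ℂ => (q.1, q.2 + f q.1) := funext hF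
  subst hFe
  have hD : ∀ (p ξ : ℂ × ℂ),
      fderiv ℝ (fun q : ℂ × ℂ => (q.1, q.2 + f q.1)) p ξ
        = (ξ.1, ξ.2 + fderiv ℝ f p.1 ξ.1) := by
    intro p ξ
    have h : HasFDerivAt (fun q : ℂ × ℂ => (q.1, q.2 + f q.1))
        ((ContinuousLinearMap.fst ℝ ℂ ℂ).prod
          ((ContinuousLinearMap.snd ℝ ℂ ℂ) +
            (fderiv ℝ f p.1).comp (ContinuousLinearMap.fst ℝ ℂ ℂ))) p :=
      HasFDerivAt.prodMk hasFDerivAt_fst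
        (HasFDerivAt.add hasFDerivAt_snd (((hf' p.1).hasFDerivAt).comp p hasFDerivAt_fst))
    rw [h.fderiv]; rfl
  have hlin : ∀ (z u : ℂ), fderiv ℝ f z u
      = (u.re : ℂ) • fderiv ℝ f z 1 + (u.im : ℂ) • fderiv ℝ f z Complex.I := by
    intro z u
    have : fderiv ℝ f z u = fderiv ℝ f z (u.re • (1:ℂ) + u.im • Complex.I) := by
      congr 1
      simp [Complex.real_smul, Complex.re_add_im]
    rw [this, map_add, map_smul, map_smul]
    simp [Complex.real_smul]
  have hconj : ∀ u : ℂ, conj u = (u.re : ℂ) - (u.im : ℂ) * Complex.I := by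
    intro u
    simp [Complex.ext_iff]
  constructor
  · intro h z
    have h2 := congrArg Prod.snd (h (z, 0) (1, 0))
    simp [hD, Jsub] at h2
    linear_combination Complex.I * h2 + (fderiv ℝ f z 1) * Complex.I_sq
  · intro h p ξ
    have hz := h p.1
    have key : fderiv ℝ f p.1 (Complex.I * ξ.1)
        = Complex.I * fderiv ℝ f p.1 ξ.1 + conj (f p.1) * conj ξ.1 := by
      have h0 : fderiv ℝ f p.1 Complex.I
          = Complex.I * fderiv ℝ f p.1 1 + conj (f p.1) := by
        linear_combination (-Complex.I) * hz
          + (fderiv ℝ f p.1 Complex.I - conj (f p.1)) * Complex.I_sq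
      rw [hlin p.1 (Complex.I * ξ.1), hlin p.1 ξ.1, hconj ξ.1]
      simp only [Complex.mul_re, Complex.mul_im, Complex.I_re, Complex.I_im, smul_eq_mul]
      push_cast
      linear_combination ((ξ.1.re : ℂ) - ξ.1.im * Complex.I) * h0
        + (-(ξ.1.im : ℂ) * fderiv ℝ f p.1 1) * Complex.I_sq
    simp only [hD, Jsub, map_add]
    refine Prod.ext rfl ?_
    simp only [map_add]
    linear_combination key
end

section
/- For each point p = (z,w) ∈ ℂ × ℂ define the ℝ-linear map J_p : ℂ² → ℂ² by J_p(u,v) = (i·u, i·v + conj(w)·conj(u)). Then for any real numbers β, t and any z₀ ∈ ℂ, the affine map F(z,w) = (e^{-2iβ}·z + z₀, e^{t+iβ}·w) preserves J: DF(p)(J_p(ξ)) = J_{F(p)}(DF(p)(ξ)) for every p ∈ ℂ² and every ξ ∈ ℂ². -/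
open ComplexConjugate

/-- for any real `β, t` and `z₀ ∈ ℂ`, the affine map
`F(z,w) = (e^{-2iβ}z + z₀, e^{t+iβ}w)` preserves `J`. -/
theorem stmt15 (β t : ℝ) (z₀ : ℂ) (F : ℂ × ℂ → ℂ × ℂ)
    (hF : ∀ q : ℂ × ℂ,
      F q = (Complex.exp (-2 * Complex.I * (β : ℂ)) * q.1 + z₀,
             Complex.exp ((t : ℂ) + Complex.I * (β : ℂ)) * q.2)) :
    ∀ (p ξ : ℂ × ℂ), fderiv ℝ F p (Jsub p ξ) = Jsub (F p) (fderiv ℝ F p ξ) := by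
  set a : ℂ := Complex.exp (-2 * Complex.I * (β : ℂ)) with ha
  set b : ℂ := Complex.exp ((t : ℂ) + Complex.I * (β : ℂ)) with hb
  set L : (ℂ × ℂ) →L[ℝ] (ℂ × ℂ) :=
    (((ContinuousLinearMap.mul ℝ ℂ) a).comp (ContinuousLinearMap.fst ℝ ℂ ℂ)).prod
      (((ContinuousLinearMap.mul ℝ ℂ) b).comp (ContinuousLinearMap.snd ℝ ℂ ℂ)) with hL
  have hFeq : F = fun q => L q + (z₀, 0) := by
    funext q
    rw [hF q]
    simp [hL, Prod.ext_iff]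
  have hfd : ∀ p : ℂ × ℂ, fderiv ℝ F p = L := by
    intro p
    rw [hFeq]
    exact ((L.hasFDerivAt.add_const _).fderiv)
  intro p ξ
  rw [hfd p, hF p]
  have hLapp : ∀ x : ℂ × ℂ, L x = (a * x.1, b * x.2) := fun x => rfl
  simp only [hLapp, Jsub]
  have hconj : conj a * conj b = b := by
    rw [ha, hb, ← Complex.exp_conj, ← Complex.exp_conj, ← Complex.exp_add]
    congr 1
    simp [Complex.ext_iff]
    ring
  refine Prod.ext (by ring) ?_
  simp only [map_mul, map_add]
  linear_combination (-(conj p.2 * conj ξ.1)) * hconj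
end

section
/- For each point p = (z,w,ζ) ∈ ℂ³ define the ℝ-linear map J_p : ℂ³ → ℂ³ by J_p(u,v,q) = (i·u, i·v + conj(w)·conj(u), i·q). Then for every holomorphic (ℂ-differentiable) function Ξ : ℂ × ℂ → ℂ, the map F : ℂ³ → ℂ³ defined by F(z,w,ζ) = (z, w, Ξ(z,ζ)) preserves J: DF(p)(J_p(ξ)) = J_{F(p)}(DF(p)(ξ)) for every p ∈ ℂ³ and every ξ ∈ ℂ³. -/
open ComplexConjugate

/-- The ℝ-linear map at `p = (z,w,ζ)` encoding the almost complex structure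
`J∂_z = i∂_z + w∂_w̄`, `J∂_w = i∂_w`, `J∂_ζ = i∂_ζ` on `ℝ⁶ = ℂ³`
(the DG₂(1) model `M⁴ × ℂ`). -/
noncomputable def J6a (p : ℂ × ℂ × ℂ) (ξ : ℂ × ℂ × ℂ) : ℂ × ℂ × ℂ :=
  (Complex.I * ξ.1, Complex.I * ξ.2.1 + conj p.2.1 * conj ξ.1, Complex.I * ξ.2.2)

/-- for any holomorphic `Ξ : ℂ × ℂ → ℂ`, the map
`F(z,w,ζ) = (z, w, Ξ(z,ζ))` preserves `J`. -/
theorem stmt16 (Ξ : ℂ × ℂ → ℂ) (hΞ : Differentiable ℂ Ξ)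
    (F : ℂ × ℂ × ℂ → ℂ × ℂ × ℂ)
    (hF : ∀ p : ℂ × ℂ × ℂ, F p = (p.1, p.2.1, Ξ (p.1, p.2.2))) :
    ∀ (p ξ : ℂ × ℂ × ℂ), fderiv ℝ F p (J6a p ξ) = J6a (F p) (fderiv ℝ F p ξ) := by
  intro p ξ
  set D := fderiv ℂ Ξ (p.1, p.2.2) with hD
  have hG : HasFDerivAt F
      ((ContinuousLinearMap.fst ℂ ℂ (ℂ × ℂ)).prod
        (((ContinuousLinearMap.fst ℂ ℂ ℂ).comp (ContinuousLinearMap.snd ℂ ℂ (ℂ × ℂ))).prod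
          (D.comp ((ContinuousLinearMap.fst ℂ ℂ (ℂ × ℂ)).prod
            ((ContinuousLinearMap.snd ℂ ℂ ℂ).comp (ContinuousLinearMap.snd ℂ ℂ (ℂ × ℂ))))))) p := by
    have hFe : F = fun q : ℂ × ℂ × ℂ => (q.1, q.2.1, Ξ (q.1, q.2.2)) := funext hF
    rw [hFe]
    exact HasFDerivAt.prodMk hasFDerivAt_fst (HasFDerivAt.prodMk (HasFDerivAt.fst hasFDerivAt_snd)
      (((hΞ (p.1, p.2.2)).hasFDerivAt).comp p (HasFDerivAt.prodMk hasFDerivAt_fst (HasFDerivAt.snd hasFDerivAt_snd))))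
  have hR := (hG.restrictScalars ℝ).fderiv
  have hsm : D (Complex.I * ξ.1, Complex.I * ξ.2.2) = Complex.I * D (ξ.1, ξ.2.2) := by
    have := D.map_smul Complex.I (ξ.1, ξ.2.2)
    simpa [Prod.smul_mk, smul_eq_mul] using this
  rw [hR]
  simp [J6a, hF, hsm]
end

section
/- For each point p = (z,ζ,w) ∈ ℂ³ define the ℝ-linear map J_p : ℂ³ → ℂ³ by J_p(u,q,v) = (i·u, i·q, i·v + conj(ζ)·conj(u)). Let c ∈ ℂ and let Z, Ξ, W₀, Ψ : ℂ × ℂ → ℂ be holomorphic (ℂ-differentiable) functions of (z,ζ) such that ∂W₀/∂z = (∂Z/∂z)·Ξ - c·ζ and ∂W₀/∂ζ = (∂Z/∂ζ)·Ξ everywhere. Then the map F : ℂ³ → ℂ³ defined by F(z,ζ,w) = (Z(z,ζ), Ξ(z,ζ), conj(c)·w + (i/2)·conj(W₀(z,ζ)) + Ψ(z,ζ)) preserves J: DF(p)(J_p(ξ)) = J_{F(p)}(DF(p)(ξ)) for every p ∈ ℂ³ and every ξ ∈ ℂ³. -/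
open ComplexConjugate

/-- The ℝ-linear map at `p = (z,ζ,w)` encoding the sub-maximally symmetric almost complex
structure `J∂_z = i∂_z + ζ∂_w̄`, `J∂_ζ = i∂_ζ`, `J∂_w = i∂_w` on `ℝ⁶ = ℂ³`. -/
noncomputable def J6b (p : ℂ × ℂ × ℂ) (ξ : ℂ × ℂ × ℂ) : ℂ × ℂ × ℂ :=
  (Complex.I * ξ.1, Complex.I * ξ.2.1, Complex.I * ξ.2.2 + conj p.2.1 * conj ξ.1)

/-- expand a ℂ-linear map on ℂ×ℂ -/
lemma clm_expand (T : (ℂ × ℂ) →L[ℂ] ℂ) (a b : ℂ) :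
    T (a, b) = a * T (1, 0) + b * T (0, 1) := by
  have : (a, b) = a • ((1:ℂ), (0:ℂ)) + b • ((0:ℂ), (1:ℂ)) := by
    simp [Prod.ext_iff]
  rw [this, map_add, map_smul, map_smul]
  simp [smul_eq_mul]


/-- for holomorphic `Z, Ξ, W₀, Ψ` of `(z,ζ)` with
`∂W₀/∂z = Z_z·Ξ - c·ζ` and `∂W₀/∂ζ = Z_ζ·Ξ`, the map
`F(z,ζ,w) = (Z(z,ζ), Ξ(z,ζ), conj(c)·w + (i/2)·conj(W₀(z,ζ)) + Ψ(z,ζ))` preserves `J`. -/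
theorem stmt17 (c : ℂ) (Z Ξ W₀ Ψ : ℂ × ℂ → ℂ)
    (hZ : Differentiable ℂ Z) (hΞ : Differentiable ℂ Ξ)
    (hW₀ : Differentiable ℂ W₀) (hΨ : Differentiable ℂ Ψ)
    (h1 : ∀ q : ℂ × ℂ, fderiv ℂ W₀ q (1, 0) = fderiv ℂ Z q (1, 0) * Ξ q - c * q.2)
    (h2 : ∀ q : ℂ × ℂ, fderiv ℂ W₀ q (0, 1) = fderiv ℂ Z q (0, 1) * Ξ q)
    (F : ℂ × ℂ × ℂ → ℂ × ℂ × ℂ)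
    (hF : ∀ p : ℂ × ℂ × ℂ,
      F p = (Z (p.1, p.2.1), Ξ (p.1, p.2.1),
        conj c * p.2.2 + Complex.I / 2 * conj (W₀ (p.1, p.2.1)) + Ψ (p.1, p.2.1))) :
    ∀ (p ξ : ℂ × ℂ × ℂ), fderiv ℝ F p (J6b p ξ) = J6b (F p) (fderiv ℝ F p ξ) := by
  have hFeq : F = fun p : ℂ × ℂ × ℂ => (Z (p.1, p.2.1), Ξ (p.1, p.2.1),
      conj c * p.2.2 + Complex.I / 2 * conj (W₀ (p.1, p.2.1)) + Ψ (p.1, p.2.1)) := funext hF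
  subst hFeq
  intro p ξ
  -- the linear projection g : ℂ³ → ℂ², g p = (p.1, p.2.1)
  set g : (ℂ × ℂ × ℂ) →L[ℝ] ℂ × ℂ :=
    (ContinuousLinearMap.fst ℝ ℂ (ℂ × ℂ)).prod
      ((ContinuousLinearMap.fst ℝ ℂ ℂ).comp (ContinuousLinearMap.snd ℝ ℂ (ℂ × ℂ))) with hgdef
  have hg : ∀ x : ℂ × ℂ × ℂ, g x = (x.1, x.2.1) := fun _ => rfl
  set q : ℂ × ℂ := (p.1, p.2.1) with hq
  set A := fderiv ℂ Z q with hA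
  set B := fderiv ℂ Ξ q with hB
  set C := fderiv ℂ W₀ q with hC
  set D := fderiv ℂ Ψ q with hD
  have hgd : HasFDerivAt (fun x : ℂ × ℂ × ℂ => ((x.1, x.2.1) : ℂ × ℂ)) g p := g.hasFDerivAt
  have hZd : HasFDerivAt (fun x : ℂ × ℂ × ℂ => Z (x.1, x.2.1))
      ((A.restrictScalars ℝ).comp g) p :=
    (((hZ q).hasFDerivAt).restrictScalars ℝ).comp p hgd
  have hΞd : HasFDerivAt (fun x : ℂ × ℂ × ℂ => Ξ (x.1, x.2.1))
      ((B.restrictScalars ℝ).comp g) p :=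
    (((hΞ q).hasFDerivAt).restrictScalars ℝ).comp p hgd
  have hWd : HasFDerivAt (fun x : ℂ × ℂ × ℂ => W₀ (x.1, x.2.1))
      ((C.restrictScalars ℝ).comp g) p :=
    (((hW₀ q).hasFDerivAt).restrictScalars ℝ).comp p hgd
  have hΨd : HasFDerivAt (fun x : ℂ × ℂ × ℂ => Ψ (x.1, x.2.1))
      ((D.restrictScalars ℝ).comp g) p :=
    (((hΨ q).hasFDerivAt).restrictScalars ℝ).comp p hgd
  have hconj : HasFDerivAt (fun z : ℂ => (conj z : ℂ))
      (Complex.conjCLE.toContinuousLinearMap) (W₀ q) :=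
    Complex.conjCLE.toContinuousLinearMap.hasFDerivAt
  have hWc : HasFDerivAt (fun x : ℂ × ℂ × ℂ => conj (W₀ (x.1, x.2.1)))
      (Complex.conjCLE.toContinuousLinearMap.comp ((C.restrictScalars ℝ).comp g)) p :=
    hconj.comp p hWd
  have hw : HasFDerivAt (fun x : ℂ × ℂ × ℂ => x.2.2)
      ((ContinuousLinearMap.snd ℝ ℂ ℂ).comp (ContinuousLinearMap.snd ℝ ℂ (ℂ × ℂ))) p :=
    ((ContinuousLinearMap.snd ℝ ℂ ℂ).comp (ContinuousLinearMap.snd ℝ ℂ (ℂ × ℂ))).hasFDerivAt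
  have h3 : HasFDerivAt (fun x : ℂ × ℂ × ℂ =>
      conj c * x.2.2 + Complex.I / 2 * conj (W₀ (x.1, x.2.1)) + Ψ (x.1, x.2.1))
      ((conj c • ((ContinuousLinearMap.snd ℝ ℂ ℂ).comp (ContinuousLinearMap.snd ℝ ℂ (ℂ × ℂ))) +
        (Complex.I / 2) • (Complex.conjCLE.toContinuousLinearMap.comp ((C.restrictScalars ℝ).comp g))) +
        (D.restrictScalars ℝ).comp g) p :=
    ((hw.const_mul (conj c)).add (hWc.const_mul (Complex.I / 2))).add hΨd
  have hFd : HasFDerivAt (fun x : ℂ × ℂ × ℂ => ((Z (x.1, x.2.1), Ξ (x.1, x.2.1),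
      conj c * x.2.2 + Complex.I / 2 * conj (W₀ (x.1, x.2.1)) + Ψ (x.1, x.2.1)) : ℂ × ℂ × ℂ))
      (((A.restrictScalars ℝ).comp g).prod
        (((B.restrictScalars ℝ).comp g).prod
          ((conj c • ((ContinuousLinearMap.snd ℝ ℂ ℂ).comp (ContinuousLinearMap.snd ℝ ℂ (ℂ × ℂ))) +
            (Complex.I / 2) • (Complex.conjCLE.toContinuousLinearMap.comp ((C.restrictScalars ℝ).comp g))) +
            (D.restrictScalars ℝ).comp g))) p :=
    hZd.prodMk (hΞd.prodMk h3)
  rw [hFd.fderiv]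
  -- now both sides are explicit
  have hsm : ∀ (T : (ℂ × ℂ) →L[ℂ] ℂ) (a b : ℂ),
      T (Complex.I * a, Complex.I * b) = Complex.I * T (a, b) := by
    intro T a b
    have : ((Complex.I * a, Complex.I * b) : ℂ × ℂ) = Complex.I • (a, b) := by
      simp [Prod.ext_iff, smul_eq_mul]
    rw [this, map_smul, smul_eq_mul]
  have hCval : C (ξ.1, ξ.2.1) = Ξ q * A (ξ.1, ξ.2.1) - c * p.2.1 * ξ.1 := by
    rw [clm_expand C, clm_expand A, h1 q, h2 q]
    ring_nf
    simp only [hA, hq]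
    ring
  have hsnd : ∀ x : ℂ × ℂ × ℂ,
      ((ContinuousLinearMap.snd ℝ ℂ ℂ).comp (ContinuousLinearMap.snd ℝ ℂ (ℂ × ℂ))) x = x.2.2 :=
    fun _ => rfl
  simp only [J6b, ContinuousLinearMap.prod_apply, ContinuousLinearMap.comp_apply,
    ContinuousLinearMap.add_apply, ContinuousLinearMap.smul_apply,
    ContinuousLinearMap.coe_restrictScalars', hg, ContinuousLinearEquiv.coe_coe,
    Complex.conjCLE_apply, smul_eq_mul, hsm, hCval, map_add, map_sub, map_mul,
    Complex.conj_I, hsnd]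
  refine Prod.ext ?_ (Prod.ext ?_ ?_)
  · ring
  · ring
  · ring_nf
    simp only [Complex.I_sq]
    ring
end

section
/- Let A be a 3×3 complex matrix, and for vectors x, y ∈ ℂ³ let x × y denote the cross product and star the entrywise complex conjugation. Then A satisfies the derivation identity star((A·x) × y) + star(x × (A·y)) = A·star(x × y) for all x, y ∈ ℂ³ if and only if A is skew-Hermitian with zero trace, i.e. Aᴴ = -A and tr(A) = 0 (i.e. A ∈ su(3)). -/
set_option maxHeartbeats 1000000

open Matrix

/-- a 3×3 complex matrix `A` satisfies the derivation identity
`star((Ax) × y) + star(x × (Ay)) = A·star(x × y)` for the conjugated cross product on `ℂ³`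
iff `A` is skew-Hermitian and traceless, i.e. `A ∈ su(3)`. -/
theorem stmt18 (A : Matrix (Fin 3) (Fin 3) ℂ) :
    (∀ x y : Fin 3 → ℂ,
      star (crossProduct (A.mulVec x) y) + star (crossProduct x (A.mulVec y))
        = A.mulVec (star (crossProduct x y))) ↔
    (Aᴴ = -A ∧ A.trace = 0) := by
  constructor
  · intro h
    have h01 := h ![1,0,0] ![0,1,0]
    have h12 := h ![0,1,0] ![0,0,1]
    have h20 := h ![0,0,1] ![1,0,0]
    have a02 := congrFun h01 0
    have a12 := congrFun h01 1
    have d2 := congrFun h01 2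
    have d0 := congrFun h12 0
    have a10 := congrFun h12 1
    have a20 := congrFun h12 2
    have a01 := congrFun h20 0
    have d1 := congrFun h20 1
    have a21 := congrFun h20 2
    simp [crossProduct, mulVec, dotProduct, Fin.sum_univ_three] at a02 a12 d2
    simp [crossProduct, mulVec, dotProduct, Fin.sum_univ_three] at d0 a10 a20
    simp [crossProduct, mulVec, dotProduct, Fin.sum_univ_three] at a01 d1 a21
    -- diagonal: derive trace = 0 and conj (A i i) = -A i i
    have d0' := congrArg (starRingEnd ℂ) d0
    have d1' := congrArg (starRingEnd ℂ) d1
    have d2' := congrArg (starRingEnd ℂ) d2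
    simp only [map_add, Complex.conj_conj, map_neg] at d0' d1' d2'
    have htr : A 0 0 + A 1 1 + A 2 2 = 0 := by
      linear_combination ((1:ℂ)/3) * (d0 + d1 + d2) + ((2:ℂ)/3) * (d0' + d1' + d2')
    have htr' : (starRingEnd ℂ) (A 0 0) + (starRingEnd ℂ) (A 1 1) + (starRingEnd ℂ) (A 2 2) = 0 := by
      linear_combination ((2:ℂ)/3) * (d0 + d1 + d2) + ((1:ℂ)/3) * (d0' + d1' + d2')
    constructor
    · ext i j
      fin_cases i <;> fin_cases j
      · show (starRingEnd ℂ) (A 0 0) = -A 0 0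
        linear_combination htr' - d0
      · show (starRingEnd ℂ) (A 1 0) = -A 0 1
        linear_combination -a01
      · show (starRingEnd ℂ) (A 2 0) = -A 0 2
        linear_combination -a02
      · show (starRingEnd ℂ) (A 0 1) = -A 1 0
        linear_combination -a10
      · show (starRingEnd ℂ) (A 1 1) = -A 1 1
        linear_combination htr' - d1
      · show (starRingEnd ℂ) (A 2 1) = -A 1 2
        linear_combination -a12
      · show (starRingEnd ℂ) (A 0 2) = -A 2 0
        linear_combination -a20
      · show (starRingEnd ℂ) (A 1 2) = -A 2 1
        linear_combination -a21
      · show (starRingEnd ℂ) (A 2 2) = -A 2 2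
        linear_combination htr' - d2
    · simp [Matrix.trace, Fin.sum_univ_three, htr]
  · rintro ⟨hH, ht⟩
    have ha : ∀ i j, (starRingEnd ℂ) (A i j) = -A j i := by
      intro i j
      have := congrFun (congrFun hH j) i
      simpa [conjTranspose_apply] using this
    have ht0 : A 0 0 + A 1 1 + A 2 2 = 0 := by
      simpa [Matrix.trace, Fin.sum_univ_three] using ht
    intro x y
    funext k
    fin_cases k
    · show (star (crossProduct (A.mulVec x) y) + star (crossProduct x (A.mulVec y))) 0
        = A.mulVec (star (crossProduct x y)) 0
      simp [crossProduct, mulVec, dotProduct, Fin.sum_univ_three, ha]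
      linear_combination ((starRingEnd ℂ) (x 2) * (starRingEnd ℂ) (y 1) - (starRingEnd ℂ) (x 1) * (starRingEnd ℂ) (y 2)) * ht0
    · show (star (crossProduct (A.mulVec x) y) + star (crossProduct x (A.mulVec y))) 1
        = A.mulVec (star (crossProduct x y)) 1
      simp [crossProduct, mulVec, dotProduct, Fin.sum_univ_three, ha]
      linear_combination ((starRingEnd ℂ) (x 0) * (starRingEnd ℂ) (y 2) - (starRingEnd ℂ) (x 2) * (starRingEnd ℂ) (y 0)) * ht0
    · show (star (crossProduct (A.mulVec x) y) + star (crossProduct x (A.mulVec y))) 2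
        = A.mulVec (star (crossProduct x y)) 2
      simp [crossProduct, mulVec, dotProduct, Fin.sum_univ_three, ha]
      linear_combination ((starRingEnd ℂ) (x 1) * (starRingEnd ℂ) (y 0) - (starRingEnd ℂ) (x 0) * (starRingEnd ℂ) (y 1)) * ht0
end

section
/- Let A be a 3×3 complex matrix, let D = diag(1,-1,1), and for vectors x, y ∈ ℂ³ let x × y denote the cross product and star the entrywise complex conjugation. Then A satisfies the derivation identity D·star((A·x) × y) + D·star(x × (A·y)) = A·(D·star(x × y)) for all x, y ∈ ℂ³ if and only if A·D + D·Aᴴ = 0 and tr(A) = 0 (i.e. A lies in the special unitary algebra su(2,1) of the Hermitian form of signature (2,1) determined by D). -/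
open Matrix

set_option maxHeartbeats 1000000 in
/-- with `D = diag(1,-1,1)`, a 3×3 complex matrix `A` satisfies the derivation
identity `D·star((Ax) × y) + D·star(x × (Ay)) = A·(D·star(x × y))` for the tensor
`N(x,y) = D·star(x × y)` on `ℂ³` iff `A·D + D·Aᴴ = 0` and `tr A = 0`, i.e. `A ∈ su(2,1)`
for the Hermitian form of signature `(2,1)` determined by `D`. -/
theorem stmt19 (A D : Matrix (Fin 3) (Fin 3) ℂ)
    (hD : D = Matrix.diagonal ![1, -1, 1]) :
    (∀ x y : Fin 3 → ℂ,
      D.mulVec (star (crossProduct (A.mulVec x) y))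
        + D.mulVec (star (crossProduct x (A.mulVec y)))
        = A.mulVec (D.mulVec (star (crossProduct x y)))) ↔
    (A * D + D * Aᴴ = 0 ∧ A.trace = 0) := by
  constructor
  · intro h
    have E01 := h ![1,0,0] ![0,1,0]
    have E02 := h ![1,0,0] ![0,0,1]
    have E12 := h ![0,1,0] ![0,0,1]
    have E010 := congrFun E01 0
    have E011 := congrFun E01 1
    have E012 := congrFun E01 2
    have E020 := congrFun E02 0
    have E021 := congrFun E02 1
    have E022 := congrFun E02 2
    have E120 := congrFun E12 0
    have E121 := congrFun E12 1
    have E122 := congrFun E12 2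
    simp [hD, crossProduct, Matrix.mulVec, dotProduct, Fin.sum_univ_three,
      Matrix.diagonal, star_sub, star_mul'] at E010
    simp [hD, crossProduct, Matrix.mulVec, dotProduct, Fin.sum_univ_three,
      Matrix.diagonal, star_sub, star_mul'] at E011
    simp [hD, crossProduct, Matrix.mulVec, dotProduct, Fin.sum_univ_three,
      Matrix.diagonal, star_sub, star_mul'] at E012
    simp [hD, crossProduct, Matrix.mulVec, dotProduct, Fin.sum_univ_three,
      Matrix.diagonal, star_sub, star_mul'] at E020
    simp [hD, crossProduct, Matrix.mulVec, dotProduct, Fin.sum_univ_three,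
      Matrix.diagonal, star_sub, star_mul'] at E021
    simp [hD, crossProduct, Matrix.mulVec, dotProduct, Fin.sum_univ_three,
      Matrix.diagonal, star_sub, star_mul'] at E022
    simp [hD, crossProduct, Matrix.mulVec, dotProduct, Fin.sum_univ_three,
      Matrix.diagonal, star_sub, star_mul'] at E120
    simp [hD, crossProduct, Matrix.mulVec, dotProduct, Fin.sum_univ_three,
      Matrix.diagonal, star_sub, star_mul'] at E121
    simp [hD, crossProduct, Matrix.mulVec, dotProduct, Fin.sum_univ_three,
      Matrix.diagonal, star_sub, star_mul'] at E122
    have F010 := congrArg (starRingEnd ℂ) E010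
    have F011 := congrArg (starRingEnd ℂ) E011
    have F012 := congrArg (starRingEnd ℂ) E012
    have F020 := congrArg (starRingEnd ℂ) E020
    have F021 := congrArg (starRingEnd ℂ) E021
    have F022 := congrArg (starRingEnd ℂ) E022
    have F120 := congrArg (starRingEnd ℂ) E120
    have F121 := congrArg (starRingEnd ℂ) E121
    have F122 := congrArg (starRingEnd ℂ) E122
    simp [map_add, map_sub, map_neg, _root_.map_mul] at F010 F011 F012
    simp [map_add, map_sub, map_neg, _root_.map_mul] at F020 F021 F022
    simp [map_add, map_sub, map_neg, _root_.map_mul] at F120 F121 F122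
    constructor
    · ext i j
      fin_cases i <;> fin_cases j <;>
        simp [hD, Matrix.mul_apply, Matrix.conjTranspose_apply, Fin.sum_univ_three,
          Matrix.diagonal]
      · linear_combination F021 + E012
      · linear_combination -F121
      · linear_combination -F122
      · linear_combination F020
      · linear_combination -F120 - E012
      · linear_combination F022
      · linear_combination -F010
      · linear_combination -F011
      · linear_combination -F012 + F021 + F120 + E012
    · simp [Matrix.trace, Fin.sum_univ_three, Matrix.diag]
      linear_combination F021 + F120 + E012
  · rintro ⟨h1, h2⟩ x y
    have H : ∀ i j : Fin 3, (A * D + D * Aᴴ) i j = 0 := by rw [h1]; intro i j; simp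
    have H00 := H 0 0; have H01 := H 0 1; have H02 := H 0 2
    have H10 := H 1 0; have H11 := H 1 1; have H12 := H 1 2
    have H20 := H 2 0; have H21 := H 2 1; have H22 := H 2 2
    simp [hD, Matrix.mul_apply, Matrix.conjTranspose_apply, Fin.sum_univ_three,
      Matrix.diagonal] at H00 H01 H02
    simp [hD, Matrix.mul_apply, Matrix.conjTranspose_apply, Fin.sum_univ_three,
      Matrix.diagonal] at H10 H11 H12
    simp [hD, Matrix.mul_apply, Matrix.conjTranspose_apply, Fin.sum_univ_three,
      Matrix.diagonal] at H20 H21 H22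
    have hb := congrArg (starRingEnd ℂ) h2
    simp [Matrix.trace, Fin.sum_univ_three, Matrix.diag, map_add] at hb
    funext k
    fin_cases k <;>
      simp [hD, crossProduct, Matrix.mulVec, dotProduct, Fin.sum_univ_three,
        Matrix.diagonal, star_sub, star_mul', Complex.star_def]
    · linear_combination ((starRingEnd ℂ) (x 1) * (starRingEnd ℂ) (y 2) - (starRingEnd ℂ) (x 2) * (starRingEnd ℂ) (y 1)) * hb
        - (((starRingEnd ℂ) (x 1) * (starRingEnd ℂ) (y 2) - (starRingEnd ℂ) (x 2) * (starRingEnd ℂ) (y 1)) * H00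
          + ((starRingEnd ℂ) (x 2) * (starRingEnd ℂ) (y 0) - (starRingEnd ℂ) (x 0) * (starRingEnd ℂ) (y 2)) * H01
          + ((starRingEnd ℂ) (x 0) * (starRingEnd ℂ) (y 1) - (starRingEnd ℂ) (x 1) * (starRingEnd ℂ) (y 0)) * H02)
    · linear_combination (-((starRingEnd ℂ) (x 2) * (starRingEnd ℂ) (y 0) - (starRingEnd ℂ) (x 0) * (starRingEnd ℂ) (y 2))) * hb
        - (((starRingEnd ℂ) (x 1) * (starRingEnd ℂ) (y 2) - (starRingEnd ℂ) (x 2) * (starRingEnd ℂ) (y 1)) * H10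
          + ((starRingEnd ℂ) (x 2) * (starRingEnd ℂ) (y 0) - (starRingEnd ℂ) (x 0) * (starRingEnd ℂ) (y 2)) * H11
          + ((starRingEnd ℂ) (x 0) * (starRingEnd ℂ) (y 1) - (starRingEnd ℂ) (x 1) * (starRingEnd ℂ) (y 0)) * H12)
    · linear_combination ((starRingEnd ℂ) (x 0) * (starRingEnd ℂ) (y 1) - (starRingEnd ℂ) (x 1) * (starRingEnd ℂ) (y 0)) * hb
        - (((starRingEnd ℂ) (x 1) * (starRingEnd ℂ) (y 2) - (starRingEnd ℂ) (x 2) * (starRingEnd ℂ) (y 1)) * H20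
          + ((starRingEnd ℂ) (x 2) * (starRingEnd ℂ) (y 0) - (starRingEnd ℂ) (x 0) * (starRingEnd ℂ) (y 2)) * H21
          + ((starRingEnd ℂ) (x 0) * (starRingEnd ℂ) (y 1) - (starRingEnd ℂ) (x 1) * (starRingEnd ℂ) (y 0)) * H22)
end
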